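/- Let Θ be a non-constant inner function and φ ∈ H². Then ‖P_Θ(φ)‖ / (1 - |Θ(0)|²)^{1/2} ≤ ‖A_φ‖. -/

import Mathlib

open MeasureTheory Complex Filter
open scoped ENNReal

noncomputable section

instance : Fact (0 < 2 * Real.pi) := ⟨by positivity⟩

/-- The circle group `ℝ / 2πℤ`, parametrizing the unit circle `∂𝔻`. -/
abbrev 𝕋 := AddCircle (2 * Real.pi)

/-- Normalized arclength (Haar) measure `|dζ|/2π` on the circle. -/
abbrev μT : Measure 𝕋 := AddCircle.haarAddCircle

/-- The boundary point `e^{iθ} ∈ ∂𝔻` corresponding to `θ : 𝕋`. -/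
def bz (θ : 𝕋) : ℂ := (AddCircle.toCircle θ : ℂ)

/-- The `L²(∂𝔻, |dζ|/2π)` inner product `⟨f, g⟩ = ∫ f conj(g)`. -/
def ip (f g : 𝕋 → ℂ) : ℂ := ∫ θ, f θ * (starRingEnd ℂ) (g θ) ∂μT

/-- The `L²(∂𝔻, |dζ|/2π)` norm. -/
def nrm2 (f : 𝕋 → ℂ) : ℝ := (∫ θ, ‖f θ‖ ^ 2 ∂μT) ^ (1 / 2 : ℝ)

/-- The essential supremum (`L^∞`) norm on `∂𝔻`. -/
def nrmInf (f : 𝕋 → ℂ) : ℝ := (eLpNorm f ⊤ μT).toReal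

/-- `f` belongs to the Hardy space `H²`, viewed via boundary values: `f ∈ L²` and all
negatively-indexed Fourier coefficients vanish. -/
def MemH2 (f : 𝕋 → ℂ) : Prop :=
  MemLp f 2 μT ∧ ∀ n : ℤ, n < 0 → fourierCoeff f n = 0

/-- An inner function, recorded through its boundary values: an `H²` function which is
unimodular a.e. on `∂𝔻`. -/
structure InnerFn where
  toFun : 𝕋 → ℂ
  memH2 : MemH2 toFun
  unimod : ∀ᵐ θ ∂μT, ‖toFun θ‖ = 1

/-- The Poisson extension `𝔓f` of a boundary function `f` at a point `l` of `𝔻`. -/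
def poisson (f : 𝕋 → ℂ) (l : ℂ) : ℂ :=
  ∫ θ, (((1 - ‖l‖ ^ 2) / ‖bz θ - l‖ ^ 2 : ℝ) : ℂ) * f θ ∂μT

/-- The value `Θ(l)` of an inner function at a point `l ∈ 𝔻`, recovered from its
boundary values by the Poisson integral. -/
def InnerFn.dval (Θ : InnerFn) (l : ℂ) : ℂ := poisson Θ.toFun l

/-- `Θ` is a non-constant inner function. -/
def InnerFn.NonConst (Θ : InnerFn) : Prop := ¬ ∃ c : ℂ, ∀ᵐ θ ∂μT, Θ.toFun θ = c

/-- Membership in the model space `K_Θ = H² ⊖ ΘH²`: `f ∈ H²` and `f ⟂ Θg` for all `g ∈ H²`. -/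
def MemK (Θ : InnerFn) (f : 𝕋 → ℂ) : Prop :=
  MemH2 f ∧ ∀ g : 𝕋 → ℂ, MemH2 g → ip f (fun θ => Θ.toFun θ * g θ) = 0

/-- `p` is the orthogonal projection `P_Θ(u)` of `u ∈ L²` onto the model space `K_Θ`:
`p ∈ K_Θ` and `u - p ⟂ K_Θ`. -/
def IsProjK (Θ : InnerFn) (u p : 𝕋 → ℂ) : Prop :=
  MemK Θ p ∧ ∀ k : 𝕋 → ℂ, MemK Θ k → ip (fun θ => u θ - p θ) k = 0

/-- The norm (possibly `∞`) of the truncated Toeplitz operator `A_φ f = P_Θ(φ f)`,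
densely defined on `K_Θ^∞ = K_Θ ∩ H^∞`: the supremum of `‖P_Θ(φ f)‖` over unit vectors
`f ∈ K_Θ ∩ H^∞`. -/
def ttNorm (Θ : InnerFn) (φ : 𝕋 → ℂ) : ℝ≥0∞ :=
  sSup {c : ℝ≥0∞ | ∃ f p : 𝕋 → ℂ, MemK Θ f ∧ MemLp f ⊤ μT ∧ nrm2 f = 1 ∧
    IsProjK Θ (fun θ => φ θ * f θ) p ∧ c = ENNReal.ofReal (nrm2 p)}

/-- The reproducing kernel `k_λ(z) = (1 - conj(Θ(λ))Θ(z))/(1 - conj(λ)z)` of `K_Θ`,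
as a boundary function. -/
def kfun (Θ : InnerFn) (l : ℂ) (θ : 𝕋) : ℂ :=
  (1 - (starRingEnd ℂ) (Θ.dval l) * Θ.toFun θ) / (1 - (starRingEnd ℂ) l * bz θ)

/-- The Stolz (nontangential approach) region at a boundary point `z0 ∈ ∂𝔻` with
aperture `κ`. -/
def stolzAt (z0 : ℂ) (κ : ℝ) : Set ℂ := {z : ℂ | ‖z‖ < 1 ∧ ‖z - z0‖ < κ * (1 - ‖z‖)}

/-- `f` has nontangential limit `L` at the boundary point `z0`. -/
def NTLim (f : ℂ → ℂ) (z0 L : ℂ) : Prop :=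
  ∀ κ : ℝ, 1 < κ → Tendsto f (nhdsWithin z0 (stolzAt z0 κ)) (nhds L)

/-- `Θ` has a finite angular derivative at `ζ ∈ ∂𝔻`, with nontangential boundary value `w`
(of modulus one) and angular derivative `w'`: equivalently, `(Θ(z) - w)/(z - ζ)` has
nontangential limit `w'` at `ζ`. -/
def HasAngularDeriv (Θ : InnerFn) (ζ w w' : ℂ) : Prop :=
  ‖w‖ = 1 ∧ NTLim Θ.dval ζ w ∧ NTLim (fun z => (Θ.dval z - w) / (z - ζ)) ζ w'

end


open MeasureTheory Complex

section Aux

local notation "conj'" => starRingEnd ℂ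

lemma bz_norm (θ : 𝕋) : ‖bz θ‖ = 1 := by
  exact Circle.norm_coe _

lemma norm_fourier' (n : ℤ) (θ : 𝕋) : ‖(fourier n θ : ℂ)‖ = 1 := by
  rw [fourier_apply]
  exact Circle.norm_coe _

lemma memL2_conj {g : 𝕋 → ℂ} (hg : MemLp g 2 μT) :
    MemLp (fun θ => conj' (g θ)) 2 μT :=
  hg.of_le (continuous_star.comp_aestronglyMeasurable hg.aestronglyMeasurable)
    (Filter.Eventually.of_forall fun θ => by simp)

lemma integrable_mul_conj {f g : 𝕋 → ℂ} (hf : MemLp f 2 μT) (hg : MemLp g 2 μT) :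
    Integrable (fun θ => f θ * conj' (g θ)) μT := by
  have h := (memL2_conj hg).smul (φ := f) hf
    (p := 2) (q := (2:ℝ≥0∞)) (r := 1)
  rw [memLp_one_iff_integrable] at h
  exact h

lemma fourierCoeff_congr' {f g : 𝕋 → ℂ} (h : f =ᵐ[μT] g) (n : ℤ) :
    fourierCoeff f n = fourierCoeff g n := by
  rw [fourierCoeff, fourierCoeff]
  exact integral_congr_ae (h.mono fun θ hθ => by dsimp only; rw [hθ])

lemma fourierCoeff_conj' (g : 𝕋 → ℂ) (n : ℤ) :
    fourierCoeff (fun θ => conj' (g θ)) n = conj' (fourierCoeff g (-n)) := by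
  rw [fourierCoeff, fourierCoeff, ← integral_conj]
  congr 1
  ext θ
  rw [neg_neg, smul_eq_mul, smul_eq_mul, map_mul, ← fourier_neg]

lemma fourierCoeff_zero' (g : 𝕋 → ℂ) : fourierCoeff g 0 = ∫ θ, g θ ∂μT := by
  rw [fourierCoeff]
  simp [fourier_zero]

end Aux

section Aux2

local notation "conj'" => starRingEnd ℂ

lemma integral_mul_H2 {F G : 𝕋 → ℂ} (hF : MemH2 F) (hG : MemH2 G) :
    ∫ θ, F θ * G θ ∂μT = (∫ θ, F θ ∂μT) * ∫ θ, G θ ∂μT := by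
  set G' : 𝕋 → ℂ := fun θ => conj' (G θ) with hG'def
  have hG2 : MemLp G' 2 μT := memL2_conj hG.1
  set fL : Lp ℂ 2 μT := hF.1.toLp F with hfL
  set gL : Lp ℂ 2 μT := hG2.toLp G' with hgL
  have hrepr : ∀ n, fourierBasis.repr fL n = fourierCoeff F n := fun n => by
    rw [fourierBasis_repr]; exact fourierCoeff_congr' (hF.1.coeFn_toLp) n
  have hreprg : ∀ n, fourierBasis.repr gL n = conj' (fourierCoeff G (-n)) := fun n => by
    rw [fourierBasis_repr, fourierCoeff_congr' (hG2.coeFn_toLp) n, fourierCoeff_conj']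
  have hterm : ∀ n : ℤ, (inner ℂ gL (fourierBasis n) * inner ℂ (fourierBasis n) fL : ℂ)
      = fourierCoeff G (-n) * fourierCoeff F n := fun n => by
    rw [← fourierBasis.repr_apply_apply, hrepr, ← inner_conj_symm,
      ← fourierBasis.repr_apply_apply, hreprg, Complex.conj_conj]
  have hsum := fourierBasis.hasSum_inner_mul_inner gL fL
  have h0 : (inner ℂ gL fL : ℂ) = fourierCoeff G 0 * fourierCoeff F 0 := by
    rw [← hsum.tsum_eq, tsum_eq_single 0 ?_]
    · rw [hterm, neg_zero]
    · intro n hn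
      rw [hterm]
      rcases lt_or_gt_of_ne hn with h | h
      · rw [hF.2 n h, mul_zero]
      · rw [hG.2 (-n) (by omega), zero_mul]
  have hinner : (inner ℂ gL fL : ℂ) = ∫ θ, F θ * G θ ∂μT := by
    rw [MeasureTheory.L2.inner_def]
    refine integral_congr_ae ?_
    filter_upwards [hF.1.coeFn_toLp, hG2.coeFn_toLp] with θ h1 h2
    rw [RCLike.inner_apply, h1, h2]
    simp [G', mul_comm]
  rw [← hinner, h0, fourierCoeff_zero', fourierCoeff_zero', mul_comm]

lemma dval_zero (Θ : InnerFn) : Θ.dval 0 = ∫ θ, Θ.toFun θ ∂μT := by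
  rw [InnerFn.dval, poisson]
  refine integral_congr_ae (Filter.Eventually.of_forall fun θ => ?_)
  simp [bz_norm θ]

lemma theta_int (Θ : InnerFn) : Integrable Θ.toFun μT :=
  Θ.memH2.1.integrable one_le_two

lemma theta_conj_int (Θ : InnerFn) : Integrable (fun θ => conj' (Θ.toFun θ)) μT :=
  (memL2_conj Θ.memH2.1).integrable one_le_two

end Aux2

section Aux3

local notation "conj'" => starRingEnd ℂ

lemma mul_conj'' (z : ℂ) : z * conj' z = ((‖z‖ ^ 2 : ℝ) : ℂ) := by
  rw [Complex.mul_conj, Complex.normSq_eq_norm_sq]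

lemma integral_expand (Θ : InnerFn) (a b : ℂ) :
    ∫ θ, (a + b * Θ.toFun θ) * conj' (a + b * Θ.toFun θ) ∂μT
      = (a * conj' a + b * conj' b) + a * conj' b * conj' (Θ.dval 0)
        + conj' a * b * Θ.dval 0 := by
  have hae : (fun θ => (a + b * Θ.toFun θ) * conj' (a + b * Θ.toFun θ))
      =ᵐ[μT] fun θ => (a * conj' a + b * conj' b) + (a * conj' b * conj' (Θ.toFun θ)
        + conj' a * b * Θ.toFun θ) := by
    filter_upwards [Θ.unimod] with θ hθ
    have h1 : Θ.toFun θ * conj' (Θ.toFun θ) = 1 := by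
      rw [mul_conj'', hθ]; norm_num
    have h2 : (a + b * Θ.toFun θ) * conj' (a + b * Θ.toFun θ)
        = (a * conj' a + b * conj' b * (Θ.toFun θ * conj' (Θ.toFun θ)))
          + (a * conj' b * conj' (Θ.toFun θ) + conj' a * b * Θ.toFun θ) := by
      rw [map_add, map_mul]; ring
    rw [h2, h1, mul_one]
  have hB : Integrable (fun θ => a * conj' b * conj' (Θ.toFun θ)) μT :=
    (theta_conj_int Θ).const_mul _
  have hC : Integrable (fun θ => conj' a * b * Θ.toFun θ) μT :=
    (theta_int Θ).const_mul _
  have hBC : Integrable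
      (fun θ => a * conj' b * conj' (Θ.toFun θ) + conj' a * b * Θ.toFun θ) μT := hB.add hC
  rw [integral_congr_ae hae, integral_add (integrable_const _) hBC, integral_add hB hC,
    integral_const, integral_const_mul, integral_const_mul, integral_conj, ← dval_zero Θ]
  simp only [Measure.real, measure_univ, ENNReal.toReal_one, one_smul]
  ring

lemma ofReal_integral_norm_sq (Θ : InnerFn) (a b : ℂ) :
    ((∫ θ, ‖a + b * Θ.toFun θ‖ ^ 2 ∂μT : ℝ) : ℂ)
      = ∫ θ, (a + b * Θ.toFun θ) * conj' (a + b * Θ.toFun θ) ∂μT := by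
  refine Eq.trans integral_ofReal.symm ?_
  refine integral_congr_ae (Filter.Eventually.of_forall fun θ => ?_)
  dsimp only
  rw [mul_conj'']
  norm_cast

lemma integral_norm_sq_eq (Θ : InnerFn) (a b : ℂ)
    (h : (a * conj' a + b * conj' b) + a * conj' b * conj' (Θ.dval 0)
        + conj' a * b * Θ.dval 0 = ((1 - ‖Θ.dval 0‖ ^ 2 : ℝ) : ℂ)) :
    ∫ θ, ‖a + b * Θ.toFun θ‖ ^ 2 ∂μT = 1 - ‖Θ.dval 0‖ ^ 2 := by
  have := (ofReal_integral_norm_sq Θ a b).trans ((integral_expand Θ a b).trans h)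
  exact_mod_cast this

lemma int1 (Θ : InnerFn) :
    ∫ θ, ‖-Θ.dval 0 + 1 * Θ.toFun θ‖ ^ 2 ∂μT = 1 - ‖Θ.dval 0‖ ^ 2 := by
  refine integral_norm_sq_eq Θ _ _ ?_
  have hw := mul_conj'' (Θ.dval 0)
  rw [map_neg, map_one]
  calc -Θ.dval 0 * -conj' (Θ.dval 0) + 1 * 1 + -Θ.dval 0 * 1 * conj' (Θ.dval 0)
      + -conj' (Θ.dval 0) * 1 * Θ.dval 0
      = 1 - Θ.dval 0 * conj' (Θ.dval 0) := by ring
    _ = 1 - ((‖Θ.dval 0‖ ^ 2 : ℝ) : ℂ) := by rw [hw]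
    _ = _ := by push_cast; ring

lemma int2 (Θ : InnerFn) :
    ∫ θ, ‖1 + -conj' (Θ.dval 0) * Θ.toFun θ‖ ^ 2 ∂μT = 1 - ‖Θ.dval 0‖ ^ 2 := by
  refine integral_norm_sq_eq Θ _ _ ?_
  have hw := mul_conj'' (Θ.dval 0)
  rw [map_one, map_neg, Complex.conj_conj]
  calc 1 * 1 + -conj' (Θ.dval 0) * -Θ.dval 0 + 1 * -Θ.dval 0 * conj' (Θ.dval 0)
      + 1 * -conj' (Θ.dval 0) * Θ.dval 0
      = 1 - Θ.dval 0 * conj' (Θ.dval 0) := by ring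
    _ = 1 - ((‖Θ.dval 0‖ ^ 2 : ℝ) : ℂ) := by rw [hw]
    _ = _ := by push_cast; ring

end Aux3

section Aux4

local notation "conj'" => starRingEnd ℂ

lemma norm_dval_lt (Θ : InnerFn) (hΘ : Θ.NonConst) : ‖Θ.dval 0‖ < 1 := by
  set w := Θ.dval 0 with hw
  have h0 : 0 ≤ ∫ θ, ‖-w + 1 * Θ.toFun θ‖ ^ 2 ∂μT :=
    integral_nonneg fun θ => sq_nonneg _
  have h1 : ‖w‖ ≤ 1 := by
    rw [int1 Θ] at h0
    nlinarith [norm_nonneg w]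
  rcases lt_or_eq_of_le h1 with h | h
  · exact h
  exfalso
  -- ‖w‖ = 1, so the integral is 0 and Θ is a.e. constant
  have hint : Integrable (fun θ => ‖-w + 1 * Θ.toFun θ‖ ^ 2) μT := by
    have hm : MemLp (fun θ => -w + 1 * Θ.toFun θ) 2 μT :=
      (memLp_const (-w)).add (Θ.memH2.1.const_mul 1)
    have := integrable_mul_conj hm hm
    refine (Integrable.congr this.re ?_)
    refine Filter.Eventually.of_forall fun θ => ?_
    dsimp only
    rw [mul_conj'']
    norm_cast
  have hzero : ∫ θ, ‖-w + 1 * Θ.toFun θ‖ ^ 2 ∂μT = 0 := by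
    rw [int1 Θ, ← hw, h]
    norm_num
  rw [integral_eq_zero_iff_of_nonneg (fun θ => sq_nonneg _) hint] at hzero
  apply hΘ
  refine ⟨w, ?_⟩
  filter_upwards [hzero] with θ hθ
  have : ‖-w + 1 * Θ.toFun θ‖ ^ 2 = 0 := hθ
  have h2 : -w + 1 * Θ.toFun θ = 0 := by
    rwa [pow_eq_zero_iff two_ne_zero, norm_eq_zero] at this
  linear_combination h2

lemma nrm2_sqrt (g : 𝕋 → ℂ) : nrm2 g = Real.sqrt (∫ θ, ‖g θ‖ ^ 2 ∂μT) := by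
  rw [nrm2, Real.sqrt_eq_rpow]

lemma nrm2_const_mul (r : ℝ) (hr : 0 ≤ r) (g : 𝕋 → ℂ) :
    nrm2 (fun θ => (r : ℂ) * g θ) = r * nrm2 g := by
  rw [nrm2_sqrt, nrm2_sqrt]
  have h : (fun θ => ‖(r : ℂ) * g θ‖ ^ 2) = fun θ => r ^ 2 * ‖g θ‖ ^ 2 := by
    funext θ
    rw [norm_mul, Complex.norm_real, Real.norm_eq_abs, _root_.abs_of_nonneg hr, mul_pow]
  rw [h, integral_const_mul, Real.sqrt_mul (sq_nonneg r), Real.sqrt_sq hr]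

end Aux4

section Aux5

local notation "conj'" => starRingEnd ℂ

lemma fourier_integrable (m : ℤ) : Integrable (fun θ : 𝕋 => (fourier m θ : ℂ)) μT :=
  (memLp_top_of_bound ((fourier m).continuous.aestronglyMeasurable) 1
    (Filter.Eventually.of_forall fun θ => (norm_fourier' m θ).le)).integrable le_top

lemma fourierCoeff_one {n : ℤ} (hn : n ≠ 0) :
    fourierCoeff (fun _ : 𝕋 => (1 : ℂ)) n = 0 := by
  rw [fourierCoeff]
  simp only [smul_eq_mul, mul_one]
  have key := fourier_add_half_inv_index (T := 2 * Real.pi) (n := -n)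
    (neg_ne_zero.mpr hn) (by positivity)
  exact integral_eq_zero_of_add_right_eq_neg (μ := μT) key

lemma fourierCoeff_one_add_mul (Θ : InnerFn) (d : ℂ) (n : ℤ) :
    fourierCoeff (fun θ => 1 + d * Θ.toFun θ) n
      = fourierCoeff (fun _ : 𝕋 => (1 : ℂ)) n + d * fourierCoeff Θ.toFun n := by
  rw [fourierCoeff, fourierCoeff, fourierCoeff]
  have h : (fun θ : 𝕋 => (fourier (-n)) θ • (1 + d * Θ.toFun θ))
      = fun θ : 𝕋 => (fourier (-n)) θ • (1 : ℂ) + d * ((fourier (-n)) θ • Θ.toFun θ) := by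
    funext θ
    simp only [smul_eq_mul]
    ring
  have hI1 : Integrable (fun θ : 𝕋 => (fourier (-n)) θ • (1 : ℂ)) μT := by
    simpa using fourier_integrable (-n)
  have hI2 : Integrable (fun θ : 𝕋 => d * ((fourier (-n)) θ • Θ.toFun θ)) μT := by
    simp only [smul_eq_mul]
    exact ((theta_int Θ).bdd_mul ((fourier (-n)).continuous.aestronglyMeasurable)
      (Filter.Eventually.of_forall fun θ => (norm_fourier' (-n) θ).le)).const_mul d
  rw [h, integral_add hI1 hI2, integral_const_mul]

lemma memL2_theta_mul (Θ : InnerFn) {g : 𝕋 → ℂ} (hg : MemLp g 2 μT) :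
    MemLp (fun θ => Θ.toFun θ * g θ) 2 μT := by
  refine hg.of_le (Θ.memH2.1.aestronglyMeasurable.mul hg.aestronglyMeasurable) ?_
  filter_upwards [Θ.unimod] with θ hθ
  rw [norm_mul, hθ, one_mul]

lemma ip_kernel_orth (Θ : InnerFn) {g : 𝕋 → ℂ} (hg : MemH2 g) (r : ℂ) :
    ip (fun θ => r * (1 + -conj' (Θ.dval 0) * Θ.toFun θ))
      (fun θ => Θ.toFun θ * g θ) = 0 := by
  show (∫ θ, (r * (1 + -conj' (Θ.dval 0) * Θ.toFun θ)) * conj' (Θ.toFun θ * g θ) ∂μT) = 0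
  have hstep : (fun θ => (r * (1 + -conj' (Θ.dval 0) * Θ.toFun θ)) * conj' (Θ.toFun θ * g θ))
      = fun θ => r * ((1 + -conj' (Θ.dval 0) * Θ.toFun θ) * conj' (Θ.toFun θ * g θ)) := by
    funext θ; ring
  rw [hstep, integral_const_mul]
  have hae : (fun θ => (1 + -conj' (Θ.dval 0) * Θ.toFun θ) * conj' (Θ.toFun θ * g θ))
      =ᵐ[μT] fun θ => conj' (Θ.toFun θ * g θ) + -conj' (Θ.dval 0) * conj' (g θ) := by
    filter_upwards [Θ.unimod] with θ hθ
    have h1 : Θ.toFun θ * conj' (Θ.toFun θ) = 1 := by rw [mul_conj'', hθ]; norm_num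
    calc (1 + -conj' (Θ.dval 0) * Θ.toFun θ) * conj' (Θ.toFun θ * g θ)
        = conj' (Θ.toFun θ * g θ)
          + -conj' (Θ.dval 0) * ((Θ.toFun θ * conj' (Θ.toFun θ)) * conj' (g θ)) := by
          rw [map_mul]; ring
      _ = _ := by rw [h1]; ring
  have hI1 : Integrable (fun θ => conj' (Θ.toFun θ * g θ)) μT :=
    (memL2_conj (memL2_theta_mul Θ hg.1)).integrable one_le_two
  have hI2 : Integrable (fun θ => -conj' (Θ.dval 0) * conj' (g θ)) μT :=
    ((memL2_conj hg.1).integrable one_le_two).const_mul _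
  rw [integral_congr_ae hae, integral_add hI1 hI2, integral_conj, integral_const_mul,
    integral_conj, integral_mul_H2 Θ.memH2 hg, ← dval_zero Θ, map_mul]
  ring

end Aux5

/-- for `φ ∈ H²`, `‖P_Θ(φ)‖ / (1-|Θ(0)|²)^{1/2} ≤ ‖A_φ‖`. -/
theorem ttNorm_lower_proj_H2 (Θ : InnerFn) (hΘ : Θ.NonConst) (φ : 𝕋 → ℂ)
    (hφ : MemH2 φ) (p : 𝕋 → ℂ) (hp : IsProjK Θ φ p) :
    ENNReal.ofReal (nrm2 p / Real.sqrt (1 - ‖Θ.dval 0‖ ^ 2)) ≤ ttNorm Θ φ := by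
  have hwlt : ‖Θ.dval 0‖ < 1 := norm_dval_lt Θ hΘ
  set c : ℝ := Real.sqrt (1 - ‖Θ.dval 0‖ ^ 2) with hcdef
  have hn0 : (0:ℝ) < 1 - ‖Θ.dval 0‖ ^ 2 := by nlinarith [norm_nonneg (Θ.dval 0)]
  have hc2 : c ^ 2 = 1 - ‖Θ.dval 0‖ ^ 2 := Real.sq_sqrt hn0.le
  have hcpos : 0 < c := Real.sqrt_pos.mpr hn0
  set f : 𝕋 → ℂ := fun θ =>
    ((c⁻¹ : ℝ) : ℂ) * (1 + -(starRingEnd ℂ) (Θ.dval 0) * Θ.toFun θ) with hfdef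
  set p' : 𝕋 → ℂ := fun θ => ((c⁻¹ : ℝ) : ℂ) * p θ with hp'def
  -- f ∈ L²
  have hfL2 : MemLp f 2 μT := by
    rw [hfdef]
    exact ((memLp_const (1:ℂ)).add (Θ.memH2.1.const_mul _)).const_mul _
  -- f ∈ K_Θ
  have hfK : MemK Θ f := by
    constructor
    · refine ⟨hfL2, fun n hn => ?_⟩
      have h1 : fourierCoeff f n = ((c⁻¹ : ℝ) : ℂ) *
          fourierCoeff (fun θ => 1 + -(starRingEnd ℂ) (Θ.dval 0) * Θ.toFun θ) n :=
        fourierCoeff.const_mul _ _ n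
      rw [h1, fourierCoeff_one_add_mul Θ _ n, fourierCoeff_one (ne_of_lt hn),
        Θ.memH2.2 n hn]
      ring
    · intro g hg
      exact ip_kernel_orth Θ hg _
  -- f ∈ L^∞
  have hfinf : MemLp f ⊤ μT := by
    refine memLp_top_of_bound hfL2.aestronglyMeasurable (c⁻¹ * (1 + ‖Θ.dval 0‖)) ?_
    filter_upwards [Θ.unimod] with θ hθ
    rw [hfdef]
    have h1 : ‖((c⁻¹ : ℝ) : ℂ) * (1 + -(starRingEnd ℂ) (Θ.dval 0) * Θ.toFun θ)‖
        = c⁻¹ * ‖1 + -(starRingEnd ℂ) (Θ.dval 0) * Θ.toFun θ‖ := by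
      rw [norm_mul, Complex.norm_real, Real.norm_eq_abs,
        _root_.abs_of_nonneg (inv_nonneg.mpr hcpos.le)]
    rw [h1]
    refine mul_le_mul_of_nonneg_left ?_ (inv_nonneg.mpr hcpos.le)
    calc ‖1 + -(starRingEnd ℂ) (Θ.dval 0) * Θ.toFun θ‖
        ≤ ‖(1:ℂ)‖ + ‖-(starRingEnd ℂ) (Θ.dval 0) * Θ.toFun θ‖ := norm_add_le _ _
      _ = 1 + ‖Θ.dval 0‖ := by
          rw [norm_one, norm_mul, norm_neg, RCLike.norm_conj, hθ, mul_one]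
  -- ‖f‖ = 1
  have hfnrm : nrm2 f = 1 := by
    have h1 : nrm2 f = c⁻¹ *
        nrm2 (fun θ => 1 + -(starRingEnd ℂ) (Θ.dval 0) * Θ.toFun θ) := by
      rw [hfdef]; exact nrm2_const_mul _ (inv_nonneg.mpr hcpos.le) _
    rw [h1, nrm2_sqrt, int2 Θ, ← hcdef, inv_mul_cancel₀ hcpos.ne']
  -- p' is the projection of φ f
  have hproj : IsProjK Θ (fun θ => φ θ * f θ) p' := by
    constructor
    · constructor
      · refine ⟨hp.1.1.1.const_mul _, fun n hn => ?_⟩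
        have h1 : fourierCoeff p' n = ((c⁻¹ : ℝ) : ℂ) * fourierCoeff p n :=
          fourierCoeff.const_mul _ _ n
        rw [h1, hp.1.1.2 n hn, mul_zero]
      · intro g hg
        have h1 : (fun θ => p' θ * (starRingEnd ℂ) (Θ.toFun θ * g θ))
            = fun θ => ((c⁻¹ : ℝ) : ℂ) * (p θ * (starRingEnd ℂ) (Θ.toFun θ * g θ)) := by
          funext θ; rw [hp'def]; ring
        show (∫ θ, p' θ * (starRingEnd ℂ) (Θ.toFun θ * g θ) ∂μT) = 0
        rw [h1, integral_const_mul]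
        have h2 : (∫ θ, p θ * (starRingEnd ℂ) (Θ.toFun θ * g θ) ∂μT) = 0 := hp.1.2 g hg
        rw [h2, mul_zero]
    · intro k hk
      have hkL2 : MemLp k 2 μT := hk.1.1
      show (∫ θ, (φ θ * f θ - p' θ) * (starRingEnd ℂ) (k θ) ∂μT) = 0
      have hstep : (fun θ => (φ θ * f θ - p' θ) * (starRingEnd ℂ) (k θ))
          = fun θ => ((c⁻¹ : ℝ) : ℂ) * ((φ θ - p θ) * (starRingEnd ℂ) (k θ)
            + -(starRingEnd ℂ) (Θ.dval 0) * ((Θ.toFun θ * φ θ) * (starRingEnd ℂ) (k θ))) := by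
        funext θ
        rw [hfdef, hp'def]
        ring
      have hI1 : Integrable (fun θ => (φ θ - p θ) * (starRingEnd ℂ) (k θ)) μT :=
        integrable_mul_conj (hφ.1.sub hp.1.1.1) hkL2
      have hI2 : Integrable (fun θ => -(starRingEnd ℂ) (Θ.dval 0) *
          ((Θ.toFun θ * φ θ) * (starRingEnd ℂ) (k θ))) μT :=
        (integrable_mul_conj (memL2_theta_mul Θ hφ.1) hkL2).const_mul _
      rw [hstep, integral_const_mul, integral_add hI1 hI2, integral_const_mul]
      have h1 : (∫ θ, (φ θ - p θ) * (starRingEnd ℂ) (k θ) ∂μT) = 0 := hp.2 k hk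
      have h2 : (∫ θ, (Θ.toFun θ * φ θ) * (starRingEnd ℂ) (k θ) ∂μT) = 0 := by
        have h3 : ip k (fun θ => Θ.toFun θ * φ θ) = 0 := hk.2 φ hφ
        have h4 : (starRingEnd ℂ) (ip k (fun θ => Θ.toFun θ * φ θ))
            = ∫ θ, (Θ.toFun θ * φ θ) * (starRingEnd ℂ) (k θ) ∂μT := by
          refine Eq.trans (integral_conj (f := fun θ =>
            k θ * (starRingEnd ℂ) (Θ.toFun θ * φ θ))).symm ?_
          refine integral_congr_ae (Filter.Eventually.of_forall fun θ => ?_)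
          dsimp only
          rw [map_mul, Complex.conj_conj]
          ring
        rw [← h4, h3, map_zero]
      rw [h1, h2, mul_zero, zero_add, mul_zero]
  -- value identification
  have hval : nrm2 p / c = nrm2 p' := by
    rw [hp'def, nrm2_const_mul _ (inv_nonneg.mpr hcpos.le), div_eq_inv_mul]
  rw [hval]
  exact le_sSup ⟨f, p', hfK, hfinf, hfnrm, hproj, rfl⟩
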